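/- Let μ, α ∈ ℝ and F_L(α) := (cosh(2α))^(−1/2) • ![![1, sinh(2α)], ![0, cosh(2α)]] (a 2×2 real matrix). Then: (i) (F_L(α)·F_L(α)ᵀ)⁻¹ = ![![cosh(2α), −sinh(2α)], ![−sinh(2α), cosh(2α)]]; (ii) σ_B := μ • (1 − (F_L(α)·F_L(α)ᵀ)⁻¹) = ![![μ·(1 − cosh(2α)), μ·sinh(2α)], ![μ·sinh(2α), μ·(1 − cosh(2α))]]; and (iii) if μ > 0 and α > 0, the diagonal entries of σ_B are strictly negative, hence σ_B is not a pure shear stress. -/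

import Mathlib

set_option linter.unreachableTactic false
set_option linter.unnecessarySeqFocus false
set_option linter.unusedTactic false


open Matrix Real

/-- Eq. (4-22): for the Ogden-B model under LFSS deformation, the Cauchy stress
`σ_B = μ(I − c⁻¹)` has strictly negative diagonal entries when `μ > 0` and `α > 0`;
hence it is not a pure shear stress. -/
theorem ogden_B_lfss_not_pure_shear (μ α : ℝ) :
    let F_L : Matrix (Fin 2) (Fin 2) ℝ :=
      (Real.sqrt (Real.cosh (2*α)))⁻¹ • !![1, Real.sinh (2*α); 0, Real.cosh (2*α)]
    let σ_B : Matrix (Fin 2) (Fin 2) ℝ := μ • ((1 : Matrix (Fin 2) (Fin 2) ℝ) - (F_L * F_Lᵀ)⁻¹)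
    (F_L * F_Lᵀ)⁻¹ =
      !![Real.cosh (2*α), -Real.sinh (2*α); -Real.sinh (2*α), Real.cosh (2*α)] ∧
    σ_B = !![μ * (1 - Real.cosh (2*α)), μ * Real.sinh (2*α);
             μ * Real.sinh (2*α), μ * (1 - Real.cosh (2*α))] ∧
    (0 < μ → 0 < α → σ_B 0 0 < 0 ∧ σ_B 1 1 < 0) := by
  intro F_L σ_B
  have hc : (0:ℝ) < Real.cosh (2*α) := Real.cosh_pos (2*α)
  have hid : Real.cosh (2*α) ^ 2 - Real.sinh (2*α) ^ 2 = 1 :=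
    Real.cosh_sq_sub_sinh_sq (2*α)
  have hs : Real.sqrt (Real.cosh (2*α)) * Real.sqrt (Real.cosh (2*α)) = Real.cosh (2*α) :=
    Real.mul_self_sqrt hc.le
  have hFF : F_L * F_Lᵀ =
      !![Real.cosh (2*α), Real.sinh (2*α); Real.sinh (2*α), Real.cosh (2*α)] := by
    show ((Real.sqrt (Real.cosh (2*α)))⁻¹ • !![1, Real.sinh (2*α); 0, Real.cosh (2*α)]) *
        ((Real.sqrt (Real.cosh (2*α)))⁻¹ • !![1, Real.sinh (2*α); 0, Real.cosh (2*α)])ᵀ = _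
    have hsne : Real.sqrt (Real.cosh (2*α)) ≠ 0 :=
      ne_of_gt (Real.sqrt_pos.mpr hc)
    ext i j
    fin_cases i <;> fin_cases j <;>
      simp [Matrix.mul_apply, Fin.sum_univ_two, Matrix.transpose_apply, Matrix.vecHead, Matrix.vecTail] <;>
      field_simp <;> nlinarith [hs, hid, (show Real.sqrt (Real.cosh (2*α)) ^ 2 * Real.sinh (2*α) = Real.cosh (2*α) * Real.sinh (2*α) by rw [Real.sq_sqrt hc.le])]
  have hinv : (F_L * F_Lᵀ)⁻¹ =
      !![Real.cosh (2*α), -Real.sinh (2*α); -Real.sinh (2*α), Real.cosh (2*α)] := by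
    rw [hFF]
    apply Matrix.inv_eq_right_inv
    ext i j
    fin_cases i <;> fin_cases j <;>
      simp [Matrix.mul_apply, Fin.sum_univ_two, Matrix.one_apply] <;> nlinarith [hid]
  refine ⟨hinv, ?_, ?_⟩
  · show μ • ((1 : Matrix (Fin 2) (Fin 2) ℝ) - (F_L * F_Lᵀ)⁻¹) = _
    rw [hinv]
    ext i j
    fin_cases i <;> fin_cases j <;>
      simp [Matrix.one_apply, mul_comm] <;> ring
  · intro hμ hα
    have h1 : 1 < Real.cosh (2*α) := Real.one_lt_cosh.mpr (by positivity)
    have : σ_B 0 0 = μ * (1 - Real.cosh (2*α)) := by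
      show (μ • ((1 : Matrix (Fin 2) (Fin 2) ℝ) - (F_L * F_Lᵀ)⁻¹)) 0 0 = _
      rw [hinv]; simp [Matrix.one_apply]; try ring
    have h2 : σ_B 1 1 = μ * (1 - Real.cosh (2*α)) := by
      show (μ • ((1 : Matrix (Fin 2) (Fin 2) ℝ) - (F_L * F_Lᵀ)⁻¹)) 1 1 = _
      rw [hinv]; simp [Matrix.one_apply]; try ring
    rw [this, h2]
    constructor <;> nlinarith
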